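/- For every positive integer n, the flip map f is a bijection from 𝒟_n to ℰ_n, where f(D) = (f_{v_1} ∘ ⋯ ∘ f_{v_k})(D) and {v_1,...,v_k} is the set of right improper vertices of D. -/

import Mathlib

/-- Labeled bicolored binary trees: each vertex carries a label and a color
(`true` = black, `false` = white), and has a left and a right (possibly empty) subtree. -/
inductive CBT : Type
  | nil : CBT
  | node (label : ℕ) (black : Bool) (l r : CBT) : CBT
deriving DecidableEq

/-- The multiset of labels of a bicolored binary tree. -/
def CBT.labels : CBT → Multiset ℕ
  | .nil => 0
  | .node a _ l r => a ::ₘ (l.labels + r.labels)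

/-- The smallest label of a bicolored binary tree (`⊤` for the empty tree). -/
noncomputable def CBT.minL : CBT → ℕ∞
  | .nil => ⊤
  | .node a _ l r => min (a : ℕ∞) (min l.minL r.minL)

/-- A vertex is *proper* if its label is the smallest among its descendants (including
itself), and *improper* otherwise; so the vertex `node a c l r` is improper iff
`min l.minL r.minL < a`.  `CBT.improperBlack B` says every improper vertex of `B` is black. -/
def CBT.improperBlack : CBT → Prop
  | .nil => True
  | .node a c l r =>
      (min l.minL r.minL < (a : ℕ∞) → c = true) ∧ l.improperBlack ∧ r.improperBlack

/-- `𝒟_n`: bicolored binary trees on `[n] = {1,…,n}` whose improper vertices are all black. -/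
def Dset (n : ℕ) : Set CBT :=
  {B | B.labels = (Finset.Icc 1 n).val ∧ B.improperBlack}

/-- `CBT.leftImp B` says every improper vertex of `B` is *left improper*, i.e. the
smallest label in its left subtree is smaller than the smallest label in its right
subtree. -/
def CBT.leftImp : CBT → Prop
  | .nil => True
  | .node a _ l r =>
      (min l.minL r.minL < (a : ℕ∞) → l.minL < r.minL) ∧ l.leftImp ∧ r.leftImp

/-- `ℰ_n`: bicolored binary trees on `[n]` whose improper vertices are all left improper. -/
def Eset (n : ℕ) : Set CBT :=
  {B | B.labels = (Finset.Icc 1 n).val ∧ B.leftImp}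

/-- The flip map `f`: it performs the flip `f_v` (swap the two subtrees of `v` and change
the color of `v`) simultaneously at every *right improper* vertex `v`, i.e. at every
vertex with `m(R) < m(L)` and `m(R) < label`. -/
noncomputable def CBT.flip : CBT → CBT
  | .nil => .nil
  | .node a c l r =>
      if r.minL < l.minL ∧ r.minL < (a : ℕ∞) then .node a (!c) r.flip l.flip
      else .node a c l.flip r.flip

/-- The inverse of the flip map: flip at every improper white vertex. -/
noncomputable def CBT.unflip : CBT → CBT
  | .nil => .nil
  | .node a c l r =>
      if min l.minL r.minL < (a : ℕ∞) ∧ c = false then .node a true r.unflip l.unflip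
      else .node a c l.unflip r.unflip

namespace CBT

lemma labels_flip (B : CBT) : B.flip.labels = B.labels := by
  induction B with
  | nil => rfl
  | node a c l r ihl ihr =>
    rw [flip]
    split <;> simp only [labels, ihl, ihr, add_comm]

lemma minL_flip (B : CBT) : B.flip.minL = B.minL := by
  induction B with
  | nil => rfl
  | node a c l r ihl ihr =>
    rw [flip]
    split <;> simp only [minL, ihl, ihr, min_comm l.minL r.minL]

lemma labels_unflip (B : CBT) : B.unflip.labels = B.labels := by
  induction B with
  | nil => rfl
  | node a c l r ihl ihr =>
    rw [unflip]
    split <;> simp only [labels, ihl, ihr, add_comm]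

lemma minL_eq_top_or_mem (B : CBT) :
    B.minL = ⊤ ∨ ∃ k ∈ B.labels, B.minL = (k : ℕ∞) := by
  induction B with
  | nil => exact Or.inl rfl
  | node a c l r ihl ihr =>
    right
    rcases le_or_gt (a : ℕ∞) (min l.minL r.minL) with h | h
    · exact ⟨a, by simp [labels], by simp [minL, min_eq_left h]⟩
    · have hm : (node a c l r).minL = min l.minL r.minL := by
        simp [minL, min_eq_right h.le]
      rcases le_total l.minL r.minL with hl | hl
      · rcases ihl with h1 | ⟨k, hk, hk2⟩
        · rw [h1, top_le_iff] at hl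
          rw [h1, hl] at h
          simp at h
        · exact ⟨k, by simp [labels, hk], by rw [hm, min_eq_left hl, hk2]⟩
      · rcases ihr with h1 | ⟨k, hk, hk2⟩
        · rw [h1, top_le_iff] at hl
          rw [h1, hl] at h
          simp at h
        · exact ⟨k, by simp [labels, hk], by rw [hm, min_eq_right hl, hk2]⟩

lemma minL_ne_of_disjoint {l r : CBT} (hd : Disjoint l.labels r.labels)
    (hne : l.minL ≠ ⊤) : l.minL ≠ r.minL := by
  intro h
  rcases l.minL_eq_top_or_mem with h1 | ⟨k, hk, hk2⟩
  · exact hne h1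
  rcases r.minL_eq_top_or_mem with h2 | ⟨k', hk', hk2'⟩
  · exact hne (h.trans h2)
  have : (k : ℕ∞) = (k' : ℕ∞) := by rw [← hk2, ← hk2', h]
  have : k = k' := by exact_mod_cast this
  exact Multiset.disjoint_left.mp hd hk (this ▸ hk')

lemma leftImp_flip (B : CBT) (hnd : B.labels.Nodup) (hib : B.improperBlack) :
    B.flip.leftImp := by
  induction B with
  | nil => trivial
  | node a c l r ihl ihr =>
    rw [labels, Multiset.nodup_cons, Multiset.nodup_add] at hnd
    obtain ⟨-, hl, hr, hd⟩ := hnd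
    obtain ⟨hc, hlb, hrb⟩ := hib
    rw [flip]
    split
    · next hcond =>
      refine ⟨?_, ihr hr hrb, ihl hl hlb⟩
      intro _
      rw [minL_flip, minL_flip]
      exact hcond.1
    · next hcond =>
      refine ⟨?_, ihl hl hlb, ihr hr hrb⟩
      intro him
      rw [minL_flip, minL_flip] at him ⊢
      rcases lt_trichotomy l.minL r.minL with h | h | h
      · exact h
      · exfalso
        have hne : l.minL ≠ ⊤ := by
          intro ht
          have htr : r.minL = ⊤ := h ▸ ht
          rw [ht, htr] at him
          simp at him
        exact minL_ne_of_disjoint hd hne h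
      · exact absurd ⟨h, by rwa [min_eq_right h.le] at him⟩ hcond

lemma unflip_flip (B : CBT) (hib : B.improperBlack) : B.flip.unflip = B := by
  induction B with
  | nil => rfl
  | node a c l r ihl ihr =>
    obtain ⟨hc, hlb, hrb⟩ := hib
    rw [flip]
    split
    · next hcond =>
      have hcT : c = true := hc (by rw [min_eq_right hcond.1.le]; exact hcond.2)
      rw [unflip]
      rw [if_pos]
      · rw [ihl hlb, ihr hrb, hcT]
      · constructor
        · rw [minL_flip, minL_flip, min_comm]
          rw [min_eq_right hcond.1.le]
          exact hcond.2
        · simp [hcT]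
    · next hcond =>
      rw [unflip, if_neg, ihl hlb, ihr hrb]
      rintro ⟨h1, h2⟩
      rw [minL_flip, minL_flip] at h1
      rw [hc h1] at h2
      exact absurd h2 (by simp)

lemma minL_unflip (B : CBT) : B.unflip.minL = B.minL := by
  induction B with
  | nil => rfl
  | node a c l r ihl ihr =>
    rw [unflip]
    split <;> simp only [minL, ihl, ihr, min_comm l.minL r.minL]

lemma improperBlack_unflip (B : CBT) (hli : B.leftImp) :
    B.unflip.improperBlack := by
  induction B with
  | nil => trivial
  | node a c l r ihl ihr =>
    obtain ⟨hc, hll, hrl⟩ := hli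
    rw [unflip]
    split
    · exact ⟨fun _ => rfl, ihr hrl, ihl hll⟩
    · next hcond =>
      refine ⟨?_, ihl hll, ihr hrl⟩
      intro him
      rw [minL_unflip, minL_unflip] at him
      by_contra hcf
      exact hcond ⟨him, by simpa using hcf⟩

lemma flip_unflip (B : CBT) (hli : B.leftImp) : B.unflip.flip = B := by
  induction B with
  | nil => rfl
  | node a c l r ihl ihr =>
    obtain ⟨hc, hll, hrl⟩ := hli
    rw [unflip]
    split
    · next hcond =>
      have hlr : l.minL < r.minL := hc hcond.1
      have hmin : min l.minL r.minL = l.minL := min_eq_left hlr.le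
      rw [flip, if_pos]
      · rw [ihl hll, ihr hrl, hcond.2]
        simp
      · rw [minL_unflip, minL_unflip]
        exact ⟨hlr, by rw [hmin] at hcond; exact hcond.1⟩
    · next hcond =>
      rw [flip, if_neg, ihl hll, ihr hrl]
      rintro ⟨h1, h2⟩
      simp only [minL_unflip] at h1 h2
      have him : min l.minL r.minL < (a : ℕ∞) := by
        rw [min_eq_right h1.le]; exact h2
      exact absurd h1 (not_lt_of_gt (hc him))

end CBT

/-- The flip map `f` is a bijection from `𝒟_n` onto `ℰ_n`. -/
theorem flip_bijOn (n : ℕ) (hn : 0 < n) :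
    Set.BijOn CBT.flip (Dset n) (Eset n) := by
  refine ⟨?_, ?_, ?_⟩
  · rintro B ⟨hlab, hib⟩
    refine ⟨by rw [CBT.labels_flip, hlab], ?_⟩
    exact CBT.leftImp_flip B (by rw [hlab]; exact (Finset.Icc 1 n).nodup) hib
  · rintro B1 ⟨hlab1, hib1⟩ B2 ⟨hlab2, hib2⟩ h
    rw [← CBT.unflip_flip B1 hib1, ← CBT.unflip_flip B2 hib2, h]
  · rintro B ⟨hlab, hli⟩
    exact ⟨B.unflip, ⟨by rw [CBT.labels_unflip, hlab], CBT.improperBlack_unflip B hli⟩,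
      CBT.flip_unflip B hli⟩
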